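/- For all positive integers m, n, each of the three complex component functions f of φ_{m,n} satisfies the partial differential equation σ(x)·∂/∂x(σ(x)·∂f/∂x) + 2·∂²f/∂y² + 2·ρ(x)·f = 0 for all real x, y; equivalently, each component of φ_{m,n} is an eigenfunction with eigenvalue 2 of the Laplace–Beltrami operator Δf = −(1/ρ(x))·(σ(x)·∂/∂x(σ(x)·∂f/∂x) + 2·∂²f/∂y²) of the induced metric. -/

import Mathlib

open Real Complex

/-- The doubly periodic immersion `φ_{m,n} : ℝ² → ℂ³` of Karpukhin's family of
minimal tori of revolution in `S⁵ ⊂ ℂ³`. -/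
noncomputable def phiMN (m n : ℕ) (x y : ℝ) : Fin 3 → ℂ :=
  ![(Real.sqrt (((m : ℝ) + n) / (2 * m + n)) : ℂ) * Complex.exp (Complex.I * m * y) *
      (Real.sin x : ℂ),
    (Real.sqrt (((m : ℝ) + n) / (m + 2 * n)) : ℂ) * Complex.exp (Complex.I * n * y) *
      (Real.cos x : ℂ),
    (Real.sqrt ((n : ℝ) * Real.cos x ^ 2 / (m + 2 * n) +
        (m : ℝ) * Real.sin x ^ 2 / (2 * m + n)) : ℂ) *
      Complex.exp (-(Complex.I * ((m : ℝ) + n) * y))]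

/-- `σ(x) = √(m² + 4mn + n² − (m² − n²)cos 2x)`. -/
noncomputable def sigmaMN (m n : ℕ) (x : ℝ) : ℝ :=
  Real.sqrt ((m : ℝ) ^ 2 + 4 * m * n + n ^ 2 - ((m : ℝ) ^ 2 - n ^ 2) * Real.cos (2 * x))

/-- `ρ(x) = (m+n)(m+n − (m−n)cos 2x)`. -/
noncomputable def rhoMN (m n : ℕ) (x : ℝ) : ℝ :=
  ((m : ℝ) + n) * ((m : ℝ) + n - ((m : ℝ) - n) * Real.cos (2 * x))

lemma innerPos (m n : ℕ) (hm : 0 < m) (hn : 0 < n) (t : ℝ) :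
    0 < (m : ℝ) ^ 2 + 4 * m * n + n ^ 2 - ((m : ℝ) ^ 2 - n ^ 2) * Real.cos (2 * t) := by
  have hm1 : (1:ℝ) ≤ m := by exact_mod_cast hm
  have hn1 : (1:ℝ) ≤ n := by exact_mod_cast hn
  have h1 := Real.neg_one_le_cos (2 * t)
  have h2 := Real.cos_le_one (2 * t)
  nlinarith [mul_nonneg (mul_nonneg (by linarith : (0:ℝ) ≤ (n:ℝ)) (by linarith : (0:ℝ) ≤ 2*(m:ℝ)+n)) (by linarith : (0:ℝ) ≤ 1 + Real.cos (2*t)),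
    mul_nonneg (mul_nonneg (by linarith : (0:ℝ) ≤ (m:ℝ)) (by linarith : (0:ℝ) ≤ (m:ℝ)+2*n)) (by linarith : (0:ℝ) ≤ 1 - Real.cos (2*t))]

lemma sigmaPos (m n : ℕ) (hm : 0 < m) (hn : 0 < n) (t : ℝ) : 0 < sigmaMN m n t :=
  Real.sqrt_pos.mpr (innerPos m n hm hn t)

lemma sigmaSq (m n : ℕ) (hm : 0 < m) (hn : 0 < n) (t : ℝ) :
    sigmaMN m n t ^ 2 = (m : ℝ) ^ 2 + 4 * m * n + n ^ 2 - ((m : ℝ) ^ 2 - n ^ 2) * Real.cos (2 * t) :=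
  Real.sq_sqrt (innerPos m n hm hn t).le

lemma hasDerivAt_sigma (m n : ℕ) (hm : 0 < m) (hn : 0 < n) (t : ℝ) :
    HasDerivAt (fun s => sigmaMN m n s)
      (((m : ℝ) ^ 2 - n ^ 2) * Real.sin (2 * t) / sigmaMN m n t) t := by
  have hcos : HasDerivAt (fun s : ℝ => Real.cos (2 * s)) (-Real.sin (2 * t) * 2) t := by
    have h := (Real.hasDerivAt_cos (2 * t)).comp t (((hasDerivAt_id t).const_mul (2:ℝ)))
    have he : (Real.cos ∘ fun s : ℝ => 2 * s) = fun s : ℝ => Real.cos (2 * s) := rfl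
    simpa [he, Function.comp] using h
  have hu : HasDerivAt (fun s : ℝ => (m : ℝ) ^ 2 + 4 * m * n + n ^ 2 - ((m : ℝ) ^ 2 - n ^ 2) * Real.cos (2 * s))
      (((m : ℝ) ^ 2 - n ^ 2) * (2 * Real.sin (2 * t))) t := by
    have := ((hcos.const_mul (((m:ℝ)^2 - n^2))).const_sub ((m : ℝ) ^ 2 + 4 * m * n + n ^ 2))
    refine this.congr_deriv ?_
    ring
  have hs := (Real.hasDerivAt_sqrt (ne_of_gt (innerPos m n hm hn t))).comp t hu
  refine hs.congr_deriv ?_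
  rw [sigmaMN]
  field_simp

lemma hasDerivAt_cexp_mul (c : ℂ) (t : ℝ) :
    HasDerivAt (fun s : ℝ => Complex.exp (c * s)) (c * Complex.exp (c * t)) t := by
  have h : HasDerivAt (fun w : ℂ => Complex.exp (c * w)) (c * Complex.exp (c * t)) (t : ℂ) := by
    simpa [mul_comm] using ((hasDerivAt_id (t:ℂ)).const_mul c).cexp
  exact h.comp_ofReal

lemma phiMN_aux0 (m n : ℕ) (hm : 0 < m) (hn : 0 < n)
    (x y : ℝ) :
    (sigmaMN m n x : ℂ) *
        deriv (fun t : ℝ => (sigmaMN m n t : ℂ) * deriv (fun s : ℝ => phiMN m n s y 0) t) x +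
      2 * deriv (fun s : ℝ => deriv (fun s' : ℝ => phiMN m n x s' 0) s) y +
      2 * (rhoMN m n x : ℂ) * phiMN m n x y 0 = 0 := by
  simp only [phiMN, Matrix.cons_val_zero]
  set K : ℂ := ((Real.sqrt (((m : ℝ) + n) / (2 * m + n)) : ℝ) : ℂ) with hK
  -- inner x-derivative
  have hsx : ∀ t : ℝ, deriv (fun s : ℝ =>
      K * Complex.exp (Complex.I * m * y) * (Real.sin s : ℂ)) t
      = K * Complex.exp (Complex.I * m * y) * (Real.cos t : ℂ) := fun t =>
    (((Real.hasDerivAt_sin t).ofReal_comp).const_mul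
      (K * Complex.exp (Complex.I * m * y))).deriv
  rw [funext hsx]
  -- outer x-derivative
  have hout : HasDerivAt (fun t : ℝ => (sigmaMN m n t : ℂ) *
      (K * Complex.exp (Complex.I * m * y) * (Real.cos t : ℂ)))
      ((((m : ℝ) ^ 2 - n ^ 2) * Real.sin (2 * x) / sigmaMN m n x : ℝ) *
        (K * Complex.exp (Complex.I * m * y) * (Real.cos x : ℂ)) +
       (sigmaMN m n x : ℂ) *
        (K * Complex.exp (Complex.I * m * y) * ((-Real.sin x : ℝ) : ℂ)))
      x :=
    ((hasDerivAt_sigma m n hm hn x).ofReal_comp).mul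
      (((Real.hasDerivAt_cos x).ofReal_comp).const_mul (K * Complex.exp (Complex.I * m * y)))
  rw [hout.deriv]
  -- inner y-derivative
  have hy1 : ∀ s : ℝ, deriv (fun s' : ℝ =>
      K * Complex.exp (Complex.I * m * s') * (Real.sin x : ℂ)) s
      = K * (Complex.I * m * Complex.exp (Complex.I * m * s)) * (Real.sin x : ℂ) := by
    intro s
    have h := (((hasDerivAt_cexp_mul (Complex.I * m) s).const_mul K).mul_const
      ((Real.sin x : ℝ) : ℂ))
    have he : (fun s' : ℝ => K * Complex.exp (Complex.I * m * s') * ((Real.sin x : ℝ) : ℂ))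
        = fun s' : ℝ => K * Complex.exp (Complex.I * m * s') * ((Real.sin x : ℝ) : ℂ) := rfl
    simpa [mul_assoc] using h.deriv
  rw [funext hy1]
  have hy2 : HasDerivAt (fun s : ℝ =>
      K * (Complex.I * m * Complex.exp (Complex.I * m * s)) * (Real.sin x : ℂ))
      (K * (Complex.I * m * (Complex.I * m * Complex.exp (Complex.I * m * y))) * (Real.sin x : ℂ))
      y := by
    have h := (((hasDerivAt_cexp_mul (Complex.I * m) y).const_mul
      (Complex.I * m)).const_mul K).mul_const ((Real.sin x : ℝ) : ℂ)
    simpa [mul_assoc] using h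
  rw [hy2.deriv]
  -- algebra
  have hσ := sigmaPos m n hm hn x
  have hσne : ((sigmaMN m n x : ℝ) : ℂ) ≠ 0 := by
    exact_mod_cast ne_of_gt hσ
  have key2 : ((sigmaMN m n x : ℝ) : ℂ) ^ 2
      = ((m : ℝ) ^ 2 + 4 * m * n + n ^ 2 : ℝ) - (((m : ℝ) ^ 2 - n ^ 2 : ℝ)) * (Real.cos (2 * x) : ℂ) := by
    rw [← Complex.ofReal_pow, sigmaSq m n hm hn x]
    push_cast; ring
  have h2s : ((Real.sin (2 * x) : ℝ) : ℂ) = 2 * (Real.sin x : ℂ) * (Real.cos x : ℂ) := by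
    rw [Real.sin_two_mul]; push_cast; ring
  have h2c : ((Real.cos (2 * x) : ℝ) : ℂ) = 2 * (Real.cos x : ℂ) ^ 2 - 1 := by
    rw [Real.cos_two_mul]; push_cast; ring
  rw [rhoMN]
  push_cast
  push_cast at key2
  field_simp
  rw [Complex.cos_two_mul] at key2
  rw [Complex.sin_two_mul, Complex.cos_two_mul]
  linear_combination (norm := ring_nf) (-(K * Complex.exp (Complex.I * (m:ℂ) * (y:ℂ)) * Complex.sin (x:ℂ))) * key2
    + (2 * K * (m:ℂ)^2 * Complex.exp (Complex.I * (m:ℂ) * (y:ℂ)) * Complex.sin (x:ℂ)) * Complex.I_sq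


lemma phiMN_aux1 (m n : ℕ) (hm : 0 < m) (hn : 0 < n)
    (x y : ℝ) :
    (sigmaMN m n x : ℂ) *
        deriv (fun t : ℝ => (sigmaMN m n t : ℂ) * deriv (fun s : ℝ => phiMN m n s y 1) t) x +
      2 * deriv (fun s : ℝ => deriv (fun s' : ℝ => phiMN m n x s' 1) s) y +
      2 * (rhoMN m n x : ℂ) * phiMN m n x y 1 = 0 := by
  simp only [phiMN, Matrix.cons_val_one, Matrix.head_cons, Matrix.cons_val_zero]
  set K : ℂ := ((Real.sqrt (((m : ℝ) + n) / (m + 2 * n)) : ℝ) : ℂ) with hK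
  have hsx : ∀ t : ℝ, deriv (fun s : ℝ =>
      K * Complex.exp (Complex.I * n * y) * (Real.cos s : ℂ)) t
      = K * Complex.exp (Complex.I * n * y) * ((-Real.sin t : ℝ) : ℂ) := fun t =>
    (((Real.hasDerivAt_cos t).ofReal_comp).const_mul
      (K * Complex.exp (Complex.I * n * y))).deriv
  rw [funext hsx]
  have hout : HasDerivAt (fun t : ℝ => (sigmaMN m n t : ℂ) *
      (K * Complex.exp (Complex.I * n * y) * ((-Real.sin t : ℝ) : ℂ)))
      ((((m : ℝ) ^ 2 - n ^ 2) * Real.sin (2 * x) / sigmaMN m n x : ℝ) *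
        (K * Complex.exp (Complex.I * n * y) * ((-Real.sin x : ℝ) : ℂ)) +
       (sigmaMN m n x : ℂ) *
        (K * Complex.exp (Complex.I * n * y) * ((-Real.cos x : ℝ) : ℂ)))
      x := by
    refine ((hasDerivAt_sigma m n hm hn x).ofReal_comp).mul
      ((((Real.hasDerivAt_sin x).neg).ofReal_comp).const_mul (K * Complex.exp (Complex.I * n * y)))
  rw [hout.deriv]
  have hy1 : ∀ s : ℝ, deriv (fun s' : ℝ =>
      K * Complex.exp (Complex.I * n * s') * (Real.cos x : ℂ)) s
      = K * (Complex.I * n * Complex.exp (Complex.I * n * s)) * (Real.cos x : ℂ) := by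
    intro s
    have h := (((hasDerivAt_cexp_mul (Complex.I * n) s).const_mul K).mul_const
      ((Real.cos x : ℝ) : ℂ))
    simpa [mul_assoc] using h.deriv
  rw [funext hy1]
  have hy2 : HasDerivAt (fun s : ℝ =>
      K * (Complex.I * n * Complex.exp (Complex.I * n * s)) * (Real.cos x : ℂ))
      (K * (Complex.I * n * (Complex.I * n * Complex.exp (Complex.I * n * y))) * (Real.cos x : ℂ))
      y := by
    have h := (((hasDerivAt_cexp_mul (Complex.I * n) y).const_mul
      (Complex.I * n)).const_mul K).mul_const ((Real.cos x : ℝ) : ℂ)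
    simpa [mul_assoc] using h
  rw [hy2.deriv]
  have hσ := sigmaPos m n hm hn x
  have hσne : ((sigmaMN m n x : ℝ) : ℂ) ≠ 0 := by exact_mod_cast ne_of_gt hσ
  have key2 : ((sigmaMN m n x : ℝ) : ℂ) ^ 2
      = ((m : ℝ) ^ 2 + 4 * m * n + n ^ 2 : ℝ) - (((m : ℝ) ^ 2 - n ^ 2 : ℝ)) * (Real.cos (2 * x) : ℂ) := by
    rw [← Complex.ofReal_pow, sigmaSq m n hm hn x]
    push_cast; ring
  rw [rhoMN]
  push_cast
  push_cast at key2
  field_simp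
  rw [Complex.cos_two_mul] at key2
  rw [Complex.sin_two_mul, Complex.cos_two_mul]
  have hpy : Complex.sin (x:ℂ) ^ 2 + Complex.cos (x:ℂ) ^ 2 = 1 := Complex.sin_sq_add_cos_sq _
  linear_combination (norm := ring_nf) (-(K * Complex.exp (Complex.I * (n:ℂ) * (y:ℂ)) * Complex.cos (x:ℂ))) * key2
    + (2 * K * (n:ℂ)^2 * Complex.exp (Complex.I * (n:ℂ) * (y:ℂ)) * Complex.cos (x:ℂ)) * Complex.I_sq
    + (-2 * ((m:ℂ)^2 - (n:ℂ)^2) * K * Complex.exp (Complex.I * (n:ℂ) * (y:ℂ)) * Complex.cos (x:ℂ)) * hpy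


lemma phiMN_aux2 (m n : ℕ) (hm : 0 < m) (hn : 0 < n)
    (x y : ℝ) :
    (sigmaMN m n x : ℂ) *
        deriv (fun t : ℝ => (sigmaMN m n t : ℂ) * deriv (fun s : ℝ => phiMN m n s y 2) t) x +
      2 * deriv (fun s : ℝ => deriv (fun s' : ℝ => phiMN m n x s' 2) s) y +
      2 * (rhoMN m n x : ℂ) * phiMN m n x y 2 = 0 := by
  have hm1 : (1:ℝ) ≤ m := by exact_mod_cast hm
  have hn1 : (1:ℝ) ≤ n := by exact_mod_cast hn
  simp only [phiMN, Matrix.cons_val_two, Matrix.tail_cons, Matrix.head_cons]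
  set r : ℝ := (Real.sqrt (2 * (((m:ℝ) + 2 * n) * (2 * (m:ℝ) + n))))⁻¹ with hr
  have hDpos : (0:ℝ) < 2 * (((m:ℝ) + 2 * n) * (2 * (m:ℝ) + n)) := by nlinarith
  have gEq : ∀ s : ℝ, Real.sqrt ((n : ℝ) * Real.cos s ^ 2 / (m + 2 * n) +
      (m : ℝ) * Real.sin s ^ 2 / (2 * m + n)) = r * sigmaMN m n s := by
    intro s
    have hquot : (n : ℝ) * Real.cos s ^ 2 / (m + 2 * n) + (m : ℝ) * Real.sin s ^ 2 / (2 * m + n)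
        = ((m : ℝ) ^ 2 + 4 * m * n + n ^ 2 - ((m : ℝ) ^ 2 - n ^ 2) * Real.cos (2 * s)) /
          (2 * (((m:ℝ) + 2 * n) * (2 * (m:ℝ) + n))) := by
      rw [Real.cos_two_mul, Real.sin_sq]
      have h1 : (m:ℝ) + 2 * n ≠ 0 := by positivity
      have h2 : 2 * (m:ℝ) + n ≠ 0 := by positivity
      field_simp
      ring
    rw [hquot, Real.sqrt_div' _ hDpos.le, sigmaMN, div_eq_inv_mul]
  simp only [gEq]
  have hexp : ∀ s' : ℝ, Complex.exp (-(Complex.I * (((m:ℝ):ℂ) + (n:ℂ)) * (s':ℂ)))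
      = Complex.exp ((-(Complex.I * (((m:ℝ):ℂ) + (n:ℂ)))) * (s':ℂ)) := fun s' => by rw [neg_mul]
  simp only [hexp]
  set c3 : ℂ := -(Complex.I * (((m:ℝ):ℂ) + (n:ℂ))) with hc3
  -- inner x derivative
  have hsx : ∀ t : ℝ, deriv (fun s : ℝ => ((r * sigmaMN m n s : ℝ) : ℂ) * Complex.exp (c3 * (y:ℂ))) t
      = ((r * (((m:ℝ)^2 - n^2) * Real.sin (2*t) / sigmaMN m n t) : ℝ) : ℂ) * Complex.exp (c3 * (y:ℂ)) :=
    fun t => ((((hasDerivAt_sigma m n hm hn t).const_mul r).ofReal_comp).mul_const _).deriv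
  rw [funext hsx]
  have hone : (fun t : ℝ => ((sigmaMN m n t : ℝ) : ℂ) *
      (((r * (((m:ℝ)^2 - n^2) * Real.sin (2*t) / sigmaMN m n t) : ℝ) : ℂ) * Complex.exp (c3 * (y:ℂ))))
      = fun t : ℝ => ((r * (((m:ℝ)^2 - n^2) * Real.sin (2*t)) : ℝ) : ℂ) * Complex.exp (c3 * (y:ℂ)) := by
    funext t
    have hst : sigmaMN m n t ≠ 0 := (sigmaPos m n hm hn t).ne'
    rw [← mul_assoc, ← Complex.ofReal_mul]
    congr 2
    field_simp
  rw [hone]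
  have hsin2 : HasDerivAt (fun t : ℝ => Real.sin (2 * t)) (Real.cos (2 * x) * 2) x := by
    have h := (Real.hasDerivAt_sin (2 * x)).comp x ((hasDerivAt_id x).const_mul (2:ℝ))
    have he : (Real.sin ∘ fun s : ℝ => 2 * s) = fun s : ℝ => Real.sin (2 * s) := rfl
    simpa [he, Function.comp] using h
  have hout : HasDerivAt (fun t : ℝ => ((r * (((m:ℝ)^2 - n^2) * Real.sin (2*t)) : ℝ) : ℂ) * Complex.exp (c3 * (y:ℂ)))
      (((r * (((m:ℝ)^2 - n^2) * (Real.cos (2*x) * 2)) : ℝ) : ℂ) * Complex.exp (c3 * (y:ℂ))) x :=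
    (((hsin2.const_mul (((m:ℝ)^2 - n^2))).const_mul r).ofReal_comp).mul_const _
  rw [hout.deriv]
  -- y derivatives
  have hy1 : ∀ s : ℝ, deriv (fun s' : ℝ => ((r * sigmaMN m n x : ℝ) : ℂ) * Complex.exp (c3 * (s':ℂ))) s
      = ((r * sigmaMN m n x : ℝ) : ℂ) * (c3 * Complex.exp (c3 * (s:ℂ))) :=
    fun s => ((hasDerivAt_cexp_mul c3 s).const_mul _).deriv
  rw [funext hy1]
  have hy2 : HasDerivAt (fun s : ℝ => ((r * sigmaMN m n x : ℝ) : ℂ) * (c3 * Complex.exp (c3 * (s:ℂ))))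
      (((r * sigmaMN m n x : ℝ) : ℂ) * (c3 * (c3 * Complex.exp (c3 * (y:ℂ))))) y :=
    ((hasDerivAt_cexp_mul c3 y).const_mul c3).const_mul _
  rw [hy2.deriv]
  have hc32 : c3 ^ 2 = -(((m:ℂ) + (n:ℂ)) ^ 2) := by
    rw [hc3]
    push_cast
    ring_nf
    rw [Complex.I_sq]
    ring
  rw [rhoMN]
  push_cast
  linear_combination (2 * (r:ℂ) * ((sigmaMN m n x : ℝ) : ℂ) * Complex.exp (c3 * (y:ℂ))) * hc32


/-- Each of the three complex component functions `f` of `φ_{m,n}` satisfies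
`σ(x)·∂/∂x(σ(x)·∂f/∂x) + 2·∂²f/∂y² + 2·ρ(x)·f = 0`, i.e. it is an eigenfunction with
eigenvalue `2` of the Laplace–Beltrami operator
`Δf = −(1/ρ(x))·(σ(x)·∂/∂x(σ(x)·∂f/∂x) + 2·∂²f/∂y²)` of the induced metric. -/
theorem phiMN_component_eigenfunction (m n : ℕ) (hm : 0 < m) (hn : 0 < n)
    (x y : ℝ) (j : Fin 3) :
    (sigmaMN m n x : ℂ) *
        deriv (fun t : ℝ => (sigmaMN m n t : ℂ) * deriv (fun s : ℝ => phiMN m n s y j) t) x +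
      2 * deriv (fun s : ℝ => deriv (fun s' : ℝ => phiMN m n x s' j) s) y +
      2 * (rhoMN m n x : ℂ) * phiMN m n x y j = 0 := by
  fin_cases j
  · exact phiMN_aux0 m n hm hn x y
  · exact phiMN_aux1 m n hm hn x y
  · exact phiMN_aux2 m n hm hn x y
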